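/- arXiv:1708.06970 — 5 statements merged into one kernel-verified Lean document; each statement's English description precedes it below -/
import Mathlib

section
/- Let (Ω, P) be a probability space, Λ > 0, N : Ω → ℕ a Poisson random variable with mean Λ, and (T_i)_{i∈ℕ} a sequence of real-valued random variables, each with common law μ (a Borel probability measure on ℝ), such that the family (N, T_0, T_1, …) is mutually independent. For real numbers t₁ ≤ t₂ define the counting variable N_{[t₁,t₂]}(ω) = #{ i < N(ω) : T_i(ω) ∈ [t₁,t₂] }. Then for every z ∈ [0,1], the generating function satisfies E[ z^{N_{[t₁,t₂]}} ] = exp( Λ (z − 1) μ([t₁,t₂]) ). -/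
open MeasureTheory ProbabilityTheory
open scoped Classical

/-- Expectation of a finite product of jointly independent real random variables
is the product of the expectations. -/
lemma aux_integral_finset_prod {Ω : Type*} [MeasurableSpace Ω] {P : Measure Ω}
    [IsProbabilityMeasure P] {ι : Type*} {f : ι → Ω → ℝ}
    (hindep : iIndepFun (m := fun _ => (inferInstance : MeasurableSpace ℝ)) f P)
    (hmeas : ∀ i, Measurable (f i)) (s : Finset ι) :
    ∫ ω, ∏ i ∈ s, f i ω ∂P = ∏ i ∈ s, ∫ ω, f i ω ∂P := by
  classical
  induction s using Finset.cons_induction with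
  | empty => simp
  | cons a s ha ih =>
    have hprod : IndepFun (∏ j ∈ s, f j) (f a) P :=
      hindep.indepFun_finset_prod_of_notMem hmeas ha
    have hX : (∏ j ∈ s, f j) = fun ω => ∏ j ∈ s, f j ω := by
      funext ω; simp
    have hXm : AEStronglyMeasurable (∏ j ∈ s, f j) P := by
      rw [hX]
      exact (Finset.measurable_prod s fun i _ => hmeas i).aestronglyMeasurable
    calc ∫ ω, ∏ i ∈ Finset.cons a s ha, f i ω ∂P
        = ∫ ω, (∏ j ∈ s, f j) ω * f a ω ∂P := by
          congr 1; funext ω; rw [Finset.prod_cons, hX]; ring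
      _ = (∫ ω, (∏ j ∈ s, f j) ω ∂P) * ∫ ω, f a ω ∂P :=
          hprod.integral_fun_mul_eq_mul_integral hXm (hmeas a).aestronglyMeasurable
      _ = ∏ i ∈ Finset.cons a s ha, ∫ ω, f i ω ∂P := by
          rw [Finset.prod_cons, hX, ih]; ring

/-- The probability generating function of the number of the first `N` points
`T_0, …, T_{N-1}` that fall in the interval `[t₁, t₂]`, where `N` is Poisson with
mean `Λ` and the `T_i` are i.i.d. with law `μ`, all mutually independent, equals
`exp (Λ (z - 1) μ([t₁,t₂]))`. -/
theorem poisson_thinning_pgf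
    {Ω : Type*} [MeasurableSpace Ω] (P : Measure Ω) [IsProbabilityMeasure P]
    (Λ : ℝ) (hΛ : 0 < Λ)
    (N : Ω → ℕ) (hNmeas : Measurable N)
    (hN : ∀ r : ℕ, P {ω | N ω = r} = ENNReal.ofReal (Λ ^ r * Real.exp (-Λ) / r.factorial))
    (T : ℕ → Ω → ℝ) (hTmeas : ∀ i, Measurable (T i))
    (μ : Measure ℝ) [IsProbabilityMeasure μ]
    (hlaw : ∀ i, P.map (T i) = μ)
    (hindep : iIndepFun (m := fun _ : Option ℕ => (inferInstance : MeasurableSpace ℝ))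
      (fun o : Option ℕ => match o with
        | none => fun ω => (N ω : ℝ)
        | some i => T i) P)
    (t₁ t₂ : ℝ) (ht : t₁ ≤ t₂)
    (z : ℝ) (hz : z ∈ Set.Icc (0 : ℝ) 1) :
    ∫ ω, z ^ ((Finset.range (N ω)).filter (fun i => T i ω ∈ Set.Icc t₁ t₂)).card ∂P
      = Real.exp (Λ * (z - 1) * (μ (Set.Icc t₁ t₂)).toReal) := by
  classical
  obtain ⟨hz0, hz1⟩ := hz
  set p : ℝ := (μ (Set.Icc t₁ t₂)).toReal with hp
  have hp0 : 0 ≤ p := ENNReal.toReal_nonneg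
  set q : ℝ := 1 + (z - 1) * p with hq
  set g : ℕ → Ω → ℝ := fun i ω => if T i ω ∈ Set.Icc t₁ t₂ then z else 1 with hg
  have hgmeas : ∀ i, Measurable (g i) := fun i => by
    rw [hg]
    exact Measurable.ite ((hTmeas i) measurableSet_Icc) measurable_const measurable_const
  -- expectation of each thinning factor
  have hEg : ∀ i, ∫ ω, g i ω ∂P = q := by
    intro i
    have hfm : Measurable fun x : ℝ => if x ∈ Set.Icc t₁ t₂ then z else (1:ℝ) :=
      Measurable.ite measurableSet_Icc measurable_const measurable_const
    have h1 : ∫ ω, g i ω ∂P = ∫ x, (if x ∈ Set.Icc t₁ t₂ then z else (1:ℝ)) ∂μ := by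
      rw [← hlaw i]
      rw [integral_map (hTmeas i).aemeasurable hfm.aestronglyMeasurable]
    have h2 : (fun x => if x ∈ Set.Icc t₁ t₂ then z else (1:ℝ))
        = fun x => (Set.Icc t₁ t₂).indicator (fun _ => z - 1) x + 1 := by
      funext x; by_cases hx : x ∈ Set.Icc t₁ t₂ <;> simp [Set.indicator, hx]
    rw [h1, h2, integral_add ((integrable_const (z - 1)).indicator measurableSet_Icc)
      (integrable_const 1), integral_indicator_const _ measurableSet_Icc]
    simp only [integral_const, measureReal_def, measure_univ, ENNReal.toReal_one, smul_eq_mul, one_mul, one_smul]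
    rw [hq, hp]; ring
  -- the partition by the value of N
  set S : ℕ → Set Ω := fun n => {ω | N ω = n} with hS
  have hSmeas : ∀ n, MeasurableSet (S n) := fun n => hNmeas (measurableSet_singleton n)
  have hSdisj : Pairwise (Function.onFun Disjoint S) := fun m n hmn =>
    Set.disjoint_left.2 fun ω hm hn => hmn ((hm : N ω = m).symm.trans hn)
  have hSunion : (⋃ n, S n) = Set.univ :=
    Set.eq_univ_iff_forall.2 fun ω => Set.mem_iUnion.2 ⟨N ω, rfl⟩
  -- measurability of the counting variable and of the integrand
  have hcn : ∀ n : ℕ, Measurable fun ω =>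
      ((Finset.range n).filter (fun i => T i ω ∈ Set.Icc t₁ t₂)).card := by
    intro n
    have h : (fun ω => ((Finset.range n).filter (fun i => T i ω ∈ Set.Icc t₁ t₂)).card)
        = fun ω => ∑ i ∈ Finset.range n, if T i ω ∈ Set.Icc t₁ t₂ then 1 else 0 := by
      funext ω; rw [Finset.card_filter]
    rw [h]
    exact Finset.measurable_sum _ fun i _ =>
      Measurable.ite ((hTmeas i) measurableSet_Icc) measurable_const measurable_const
  have hcmeas : Measurable fun ω =>
      ((Finset.range (N ω)).filter (fun i => T i ω ∈ Set.Icc t₁ t₂)).card := by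
    apply measurable_to_countable'
    intro k
    have h : (fun ω => ((Finset.range (N ω)).filter (fun i => T i ω ∈ Set.Icc t₁ t₂)).card) ⁻¹' {k}
        = ⋃ n, (S n ∩ {ω | ((Finset.range n).filter
            (fun i => T i ω ∈ Set.Icc t₁ t₂)).card = k}) := by
      ext ω
      simp only [Set.mem_preimage, Set.mem_singleton_iff, Set.mem_iUnion, Set.mem_inter_iff,
        Set.mem_setOf_eq, hS]
      constructor
      · intro hk; exact ⟨N ω, rfl, hk⟩
      · rintro ⟨n, rfl, hk⟩; exact hk
    rw [h]
    exact MeasurableSet.iUnion fun n => (hSmeas n).inter ((hcn n) (measurableSet_singleton k))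
  set F : Ω → ℝ := fun ω =>
    z ^ ((Finset.range (N ω)).filter (fun i => T i ω ∈ Set.Icc t₁ t₂)).card with hF
  have hFmeas : Measurable F := by
    rw [hF]; exact measurable_from_nat.comp hcmeas
  have hFint : Integrable F P := by
    refine (integrable_const (1:ℝ)).mono' hFmeas.aestronglyMeasurable ?_
    refine Filter.Eventually.of_forall fun ω => ?_
    rw [hF, Real.norm_eq_abs, abs_of_nonneg (pow_nonneg hz0 _)]
    exact pow_le_one₀ hz0 hz1
  -- the integral over each piece
  have hpiece : ∀ n : ℕ, ∫ ω in S n, F ω ∂P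
      = (Λ ^ n * Real.exp (-Λ) / n.factorial) * q ^ n := by
    intro n
    have h1 : ∫ ω in S n, F ω ∂P = ∫ ω in S n, ∏ i ∈ Finset.range n, g i ω ∂P := by
      refine setIntegral_congr_fun (hSmeas n) fun ω hω => ?_
      have hNω : N ω = n := hω
      simp only [hF, hg, hNω]
      rw [Finset.prod_ite, Finset.prod_const, Finset.prod_const, one_pow, mul_one]
    set Y : Option ℕ → Ω → ℝ := fun o => match o with
      | none => fun ω => if N ω = n then 1 else 0
      | some i => g i with hY
    have hYmeas : ∀ o, Measurable (Y o) := by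
      rintro (_ | i)
      · exact Measurable.ite (hNmeas (measurableSet_singleton n)) measurable_const
          measurable_const
      · exact hgmeas i
    have hYindep : iIndepFun (m := fun _ : Option ℕ => (inferInstance : MeasurableSpace ℝ)) Y P := by
      have h := hindep.comp
        (fun o : Option ℕ => o.elim
          (fun x : ℝ => if x = (n : ℝ) then (1:ℝ) else 0)
          (fun _ => fun x : ℝ => if x ∈ Set.Icc t₁ t₂ then z else 1))
        (by
          rintro (_ | i)
          · exact Measurable.ite (measurableSet_eq) measurable_const measurable_const
          · exact Measurable.ite measurableSet_Icc measurable_const measurable_const)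
      convert h using 1
      funext o
      match o with
      | none => funext ω; simp [hY, Function.comp, Nat.cast_inj]
      | some i => funext ω; simp [hY, hg, Function.comp]
    have hins : (none : Option ℕ) ∉ (Finset.range n).image Option.some := by simp
    have hinj : ∀ a ∈ Finset.range n, ∀ b ∈ Finset.range n,
        Option.some a = Option.some b → a = b := fun a _ b _ h => Option.some_injective _ h
    have h2 : ∫ ω in S n, ∏ i ∈ Finset.range n, g i ω ∂P
        = ∫ ω, ∏ o ∈ insert none ((Finset.range n).image Option.some), Y o ω ∂P := by
      rw [← integral_indicator (hSmeas n)]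
      congr 1; funext ω
      rw [Finset.prod_insert hins, Finset.prod_image hinj]
      by_cases hω : N ω = n
      · simp [Set.indicator, hS, hω, hY]
      · simp [Set.indicator, hS, hω, hY]
    have hEY0 : ∫ ω, Y none ω ∂P = Λ ^ n * Real.exp (-Λ) / n.factorial := by
      have h : (fun ω => Y none ω) = Set.indicator (S n) (fun _ => (1:ℝ)) := by
        funext ω; by_cases hω : N ω = n <;> simp [hY, Set.indicator, hS, hω]
      rw [h, integral_indicator_const _ (hSmeas n), hS, measureReal_def, hN n, smul_eq_mul, mul_one,
        ENNReal.toReal_ofReal (by positivity)]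
    rw [h1, h2, aux_integral_finset_prod hYindep hYmeas, Finset.prod_insert hins,
      Finset.prod_image hinj, hEY0,
      Finset.prod_congr rfl (fun i _ => hEg i), Finset.prod_const, Finset.card_range]
  -- decompose the integral along the partition
  have hdecomp : ∫ ω, F ω ∂P = ∑' n, ∫ ω in S n, F ω ∂P := by
    rw [← setIntegral_univ, ← hSunion, integral_iUnion hSmeas hSdisj hFint.integrableOn]
  -- sum the series
  have hsum : HasSum (fun n : ℕ => (Λ ^ n * Real.exp (-Λ) / n.factorial) * q ^ n)
      (Real.exp (Λ * (z - 1) * p)) := by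
    have h0 : HasSum (fun n : ℕ => (Λ * q) ^ n / n.factorial) (Real.exp (Λ * q)) := by
      rw [Real.exp_eq_exp_ℝ]
      exact NormedSpace.expSeries_div_hasSum_exp (Λ * q)
    have h1 := h0.mul_left (Real.exp (-Λ))
    have h2 : (fun n : ℕ => Real.exp (-Λ) * ((Λ * q) ^ n / n.factorial))
        = fun n : ℕ => (Λ ^ n * Real.exp (-Λ) / n.factorial) * q ^ n := by
      funext n; rw [mul_pow]; ring
    rw [h2] at h1
    convert h1 using 1
    · rfl
    rw [← Real.exp_add]
    congr 1
    rw [hq]; ring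
  calc ∫ ω, F ω ∂P = ∑' n, ∫ ω in S n, F ω ∂P := hdecomp
    _ = ∑' n, (Λ ^ n * Real.exp (-Λ) / n.factorial) * q ^ n := tsum_congr hpiece
    _ = Real.exp (Λ * (z - 1) * p) := hsum.tsum_eq
end

section
/- Let 1 < γ < 2 and κ > 0, and define F(y) = γ κ^γ y^γ ∫_{κ y}^∞ s^{−γ−1} e^{−s} ds for y > 0. Then, with n = κγ/(γ−1) and ρ = κ^γ γ Γ(−γ) (Γ the Gamma function, which is defined and finite at −γ since γ is not an integer), the function F admits the expansion F(y) = 1 − n y + ρ y^γ + O(y²) as y → 0⁺. -/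
open MeasureTheory Asymptotics Filter
open Set Real

lemma gpfaux_hasDerivAt (p : ℝ) {s : ℝ} (hs : 0 < s) :
    HasDerivAt (fun t : ℝ => t ^ p * Real.exp (-t))
      (p * s ^ (p - 1) * Real.exp (-s) - s ^ p * Real.exp (-s)) s := by
  have h1 : HasDerivAt (fun t : ℝ => t ^ p) (p * s ^ (p - 1)) s :=
    Real.hasDerivAt_rpow_const (Or.inl hs.ne')
  have h2 : HasDerivAt (fun t : ℝ => Real.exp (-t)) (-Real.exp (-s)) s := by
    simpa using (hasDerivAt_neg s).exp
  refine (h1.mul h2).congr_deriv ?_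
  ring

lemma gpfaux_integrable (p : ℝ) (hp : p ≤ 0) {x : ℝ} (hx : 0 < x) :
    IntegrableOn (fun s : ℝ => s ^ p * Real.exp (-s)) (Set.Ioi x) := by
  have hbound : IntegrableOn (fun s : ℝ => x ^ p * Real.exp (-(1 : ℝ) * s)) (Set.Ioi x) :=
    (exp_neg_integrableOn_Ioi x one_pos).const_mul _
  refine Integrable.mono' hbound ?_ ?_
  · refine (ContinuousOn.mul ?_ ((Real.continuous_exp.comp continuous_neg).continuousOn)).aestronglyMeasurable measurableSet_Ioi
    exact fun s hs => (Real.continuousAt_rpow_const s p (Or.inl (hx.trans hs).ne')).continuousWithinAt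
  · filter_upwards [self_mem_ae_restrict (measurableSet_Ioi : MeasurableSet (Set.Ioi x))] with s hs
    have hs' : 0 < s := hx.trans hs
    rw [Real.norm_eq_abs, abs_of_nonneg (by positivity)]
    have : s ^ p ≤ x ^ p := Real.rpow_le_rpow_of_nonpos hx (le_of_lt hs) hp
    calc s ^ p * Real.exp (-s) ≤ x ^ p * Real.exp (-s) := by
          exact mul_le_mul_of_nonneg_right this (Real.exp_nonneg _)
      _ = x ^ p * Real.exp (-(1:ℝ) * s) := by ring_nf

lemma gpfaux_tendsto (p : ℝ) :
    Tendsto (fun s : ℝ => s ^ p * Real.exp (-s)) atTop (nhds 0) := by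
  have := tendsto_rpow_mul_exp_neg_mul_atTop_nhds_zero p 1 one_pos
  simpa using this

lemma gpfaux_tail (γ : ℝ) (hγ : 1 < γ) (hγ' : γ < 2) {x : ℝ} (hx : 0 < x) :
    ∫ s in Set.Ioi x, s ^ (-γ - 1) * Real.exp (-s)
      = x ^ (-γ) * Real.exp (-x) / γ - x ^ (1 - γ) * Real.exp (-x) / (γ * (γ - 1))
        + (Real.Gamma (2 - γ) - ∫ s in Set.Ioc 0 x, s ^ (1 - γ) * Real.exp (-s))
          / (γ * (γ - 1)) := by
  have hγ0 : (0:ℝ) < γ := by linarith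
  have hγ1 : (0:ℝ) < γ - 1 := by linarith
  have hc : γ * (γ - 1) ≠ 0 := by positivity
  set f : ℝ → ℝ := fun t => -(t ^ (-γ) * Real.exp (-t) / γ)
      + t ^ (1 - γ) * Real.exp (-t) / (γ * (γ - 1)) with hf
  set d : ℝ → ℝ := fun s => s ^ (-γ - 1) * Real.exp (-s)
      - s ^ (1 - γ) * Real.exp (-s) / (γ * (γ - 1)) with hd
  have hderiv : ∀ s ∈ Set.Ici x, HasDerivAt f (d s) s := by
    intro s hs
    have hs' : 0 < s := lt_of_lt_of_le hx hs
    have h1 := ((gpfaux_hasDerivAt (-γ) hs').div_const γ).neg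
    have h2 := (gpfaux_hasDerivAt (1 - γ) hs').div_const (γ * (γ - 1))
    have := h1.add h2
    refine this.congr_deriv ?_
    rw [hd]
    have e1 : (1 : ℝ) - γ - 1 = -γ := by ring
    rw [e1]
    field_simp
    ring
  have hint : IntegrableOn d (Set.Ioi x) := by
    refine (gpfaux_integrable (-γ - 1) (by linarith) hx).sub ?_
    exact (gpfaux_integrable (1 - γ) (by linarith) hx).div_const _
  have htend : Tendsto f atTop (nhds 0) := by
    have h1 := ((gpfaux_tendsto (-γ)).div_const γ).neg
    have h2 := (gpfaux_tendsto (1 - γ)).div_const (γ * (γ - 1))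
    simpa using h1.add h2
  have key : ∫ s in Set.Ioi x, d s = 0 - f x :=
    integral_Ioi_of_hasDerivAt_of_tendsto' hderiv hint htend
  have hsplit : ∫ s in Set.Ioi x, s ^ (1 - γ) * Real.exp (-s)
      = Real.Gamma (2 - γ) - ∫ s in Set.Ioc 0 x, s ^ (1 - γ) * Real.exp (-s) := by
    have h2γ : (0:ℝ) < 2 - γ := by linarith
    have hG : Real.Gamma (2 - γ) = ∫ s in Set.Ioi (0:ℝ), s ^ (1 - γ) * Real.exp (-s) := by
      rw [Real.Gamma_eq_integral h2γ]
      refine setIntegral_congr_fun measurableSet_Ioi fun s _ => ?_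
      rw [show (2:ℝ) - γ - 1 = 1 - γ by ring, mul_comm]
    have hIoc : IntegrableOn (fun s : ℝ => s ^ (1 - γ) * Real.exp (-s)) (Set.Ioc 0 x) := by
      have := (Real.GammaIntegral_convergent h2γ).congr_fun (g := fun s : ℝ => s ^ (1 - γ) * Real.exp (-s))
        (fun s (hs : s ∈ Set.Ioi (0:ℝ)) => by
          rw [show (2:ℝ) - γ - 1 = 1 - γ by ring]; beta_reduce; rw [mul_comm]) measurableSet_Ioi
      exact this.mono_set Set.Ioc_subset_Ioi_self
    have hunion : Set.Ioc 0 x ∪ Set.Ioi x = Set.Ioi (0:ℝ) := Set.Ioc_union_Ioi_eq_Ioi hx.le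
    have := setIntegral_union (Set.Ioc_disjoint_Ioi le_rfl) measurableSet_Ioi hIoc
      (gpfaux_integrable (1 - γ) (by linarith) hx)
      (f := fun s : ℝ => s ^ (1 - γ) * Real.exp (-s)) (μ := volume)
    rw [hunion] at this
    rw [hG, this]
    ring
  have hsub : ∫ s in Set.Ioi x, d s
      = (∫ s in Set.Ioi x, s ^ (-γ - 1) * Real.exp (-s))
        - (∫ s in Set.Ioi x, s ^ (1 - γ) * Real.exp (-s)) / (γ * (γ - 1)) := by
    rw [hd]
    rw [integral_sub (gpfaux_integrable (-γ - 1) (by linarith) hx)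
      ((gpfaux_integrable (1 - γ) (by linarith) hx).div_const _), integral_div]
  rw [hsub, hsplit] at key
  rw [hf] at key
  simp only [zero_sub] at key
  linear_combination key

lemma gpfaux_J_nonneg (γ : ℝ) {x : ℝ} :
    0 ≤ ∫ s in Set.Ioc 0 x, s ^ (1 - γ) * Real.exp (-s) :=
  setIntegral_nonneg measurableSet_Ioc fun s hs =>
    mul_nonneg (Real.rpow_nonneg hs.1.le _) (Real.exp_nonneg _)

lemma gpfaux_J_le (γ : ℝ) (hγ : 1 < γ) (hγ' : γ < 2) {x : ℝ} (hx : 0 < x) :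
    ∫ s in Set.Ioc 0 x, s ^ (1 - γ) * Real.exp (-s) ≤ x ^ (2 - γ) / (2 - γ) := by
  have h2γ : (0:ℝ) < 2 - γ := by linarith
  have int2 : IntegrableOn (fun s : ℝ => s ^ (1 - γ)) (Set.Ioc 0 x) := by
    have := intervalIntegral.intervalIntegrable_rpow' (a := 0) (b := x)
      (show (-1:ℝ) < 1 - γ by linarith)
    rwa [intervalIntegrable_iff_integrableOn_Ioc_of_le hx.le] at this
  have int1 : IntegrableOn (fun s : ℝ => s ^ (1 - γ) * Real.exp (-s)) (Set.Ioc 0 x) := by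
    have := (Real.GammaIntegral_convergent h2γ).congr_fun (g := fun s : ℝ => s ^ (1 - γ) * Real.exp (-s))
      (fun s (hs : s ∈ Set.Ioi (0:ℝ)) => by
        rw [show (2:ℝ) - γ - 1 = 1 - γ by ring]; beta_reduce; rw [mul_comm]) measurableSet_Ioi
    exact this.mono_set Set.Ioc_subset_Ioi_self
  calc ∫ s in Set.Ioc 0 x, s ^ (1 - γ) * Real.exp (-s)
      ≤ ∫ s in Set.Ioc 0 x, s ^ (1 - γ) := by
        refine setIntegral_mono_on int1 int2 measurableSet_Ioc fun s hs => ?_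
        exact mul_le_of_le_one_right (Real.rpow_nonneg hs.1.le _)
          (Real.exp_le_one_iff.mpr (by linarith [hs.1]))
    _ = x ^ (2 - γ) / (2 - γ) := by
        rw [← intervalIntegral.integral_of_le hx.le,
          integral_rpow (Or.inl (show (-1:ℝ) < 1 - γ by linarith)),
          show (1:ℝ) - γ + 1 = 2 - γ by ring, Real.zero_rpow (ne_of_gt h2γ)]
        ring

/-- The exact offspring GPF `F(y) = γ κ^γ y^γ Γ(-γ, κ y)` (in the variable `y = 1 - z`)
admits the expansion `F(y) = 1 - n y + ρ y^γ + O(y²)` as `y → 0⁺`, where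
`n = κγ/(γ-1)` and `ρ = κ^γ γ Γ(-γ)`. -/
theorem gpf_algebraic_expansion
    (γ κ : ℝ) (hγ : 1 < γ) (hγ' : γ < 2) (hκ : 0 < κ)
    (F : ℝ → ℝ)
    (hF : ∀ y > (0 : ℝ),
      F y = γ * κ ^ γ * y ^ γ * ∫ s in Set.Ioi (κ * y), s ^ (-γ - 1) * Real.exp (-s))
    (n ρ : ℝ) (hn : n = κ * γ / (γ - 1)) (hρ : ρ = κ ^ γ * γ * Real.Gamma (-γ)) :
    (fun y => F y - (1 - n * y + ρ * y ^ γ)) =O[nhdsWithin 0 (Set.Ioi 0)]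
      (fun y => y ^ 2) := by
  have hγ1 : (0:ℝ) < γ - 1 := by linarith
  have h2γ : (0:ℝ) < 2 - γ := by linarith
  have hγ0 : (0:ℝ) < γ := by linarith
  -- Gamma recursion : Γ(2-γ) = γ(γ-1)Γ(-γ)
  have hG2 : Real.Gamma (2 - γ) = γ * (γ - 1) * Real.Gamma (-γ) := by
    have hA := Real.Gamma_add_one (show -γ ≠ 0 by linarith)
    have hB := Real.Gamma_add_one (show -γ + 1 ≠ 0 by intro h; linarith)
    rw [show (2:ℝ) - γ = -γ + 1 + 1 by ring, hB, hA]
    ring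
  rw [isBigO_iff]
  refine ⟨κ ^ 2 + κ ^ 2 / (γ - 1) + κ ^ 2 / ((2 - γ) * (γ - 1)), ?_⟩
  filter_upwards [Ioo_mem_nhdsGT_of_mem
    (show (0:ℝ) ∈ Set.Ico 0 (1 / κ) from ⟨le_refl _, by positivity⟩)] with y hy
  obtain ⟨hy0, hy1⟩ := hy
  have hx : 0 < κ * y := by positivity
  have hx1 : κ * y ≤ 1 := by
    rw [← le_div_iff₀' hκ]
    exact hy1.le
  set J := ∫ s in Set.Ioc 0 (κ * y), s ^ (1 - γ) * Real.exp (-s) with hJdef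
  -- rpow algebra
  have e1 : κ ^ γ * y ^ γ * (κ * y) ^ (-γ) = 1 := by
    rw [Real.mul_rpow hκ.le hy0.le]
    rw [show κ ^ γ * y ^ γ * (κ ^ (-γ) * y ^ (-γ)) = (κ ^ γ * κ ^ (-γ)) * (y ^ γ * y ^ (-γ)) by ring,
      ← Real.rpow_add hκ, ← Real.rpow_add hy0]
    simp
  have e2 : κ ^ γ * y ^ γ * (κ * y) ^ (1 - γ) = κ * y := by
    rw [Real.mul_rpow hκ.le hy0.le]
    rw [show κ ^ γ * y ^ γ * (κ ^ (1-γ) * y ^ (1-γ)) = (κ ^ γ * κ ^ (1-γ)) * (y ^ γ * y ^ (1-γ)) by ring,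
      ← Real.rpow_add hκ, ← Real.rpow_add hy0]
    simp
  have e3 : κ ^ γ * y ^ γ * (κ * y) ^ (2 - γ) = κ ^ 2 * y ^ 2 := by
    rw [Real.mul_rpow hκ.le hy0.le]
    rw [show κ ^ γ * y ^ γ * (κ ^ (2-γ) * y ^ (2-γ)) = (κ ^ γ * κ ^ (2-γ)) * (y ^ γ * y ^ (2-γ)) by ring,
      ← Real.rpow_add hκ, ← Real.rpow_add hy0]
    norm_num
  -- exact value of F y
  have hFy : F y = Real.exp (-(κ * y)) - (κ * y) * Real.exp (-(κ * y)) / (γ - 1)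
      + ρ * y ^ γ - κ ^ γ * y ^ γ * J / (γ - 1) := by
    have hK : (0:ℝ) < κ ^ γ * y ^ γ := by positivity
    have e1' : (κ * y) ^ (-γ) = (κ ^ γ * y ^ γ)⁻¹ := eq_inv_of_mul_eq_one_left (by linear_combination e1)
    have e2' : (κ * y) ^ (1 - γ) = κ * y / (κ ^ γ * y ^ γ) := by
      rw [eq_div_iff hK.ne']; linarith [e2]
    rw [hF y hy0, gpfaux_tail γ hγ hγ' hx, ← hJdef, hρ, hG2, e1', e2']
    field_simp
    ring
  -- the remainder expression
  have hD : F y - (1 - n * y + ρ * y ^ γ)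
      = (Real.exp (-(κ * y)) - 1 + κ * y)
        + ((κ * y) / (γ - 1)) * (1 - Real.exp (-(κ * y)))
        - κ ^ γ * y ^ γ * J / (γ - 1) := by
    rw [hFy, hn]; field_simp; ring
  -- bounds
  have ht1 : |Real.exp (-(κ * y)) - 1 + κ * y| ≤ κ ^ 2 * y ^ 2 := by
    have := Real.abs_exp_sub_one_sub_id_le
      (x := -(κ * y)) (by rw [abs_neg, abs_of_pos hx]; exact hx1)
    calc |Real.exp (-(κ * y)) - 1 + κ * y|
        = |Real.exp (-(κ * y)) - 1 - (-(κ * y))| := by ring_nf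
      _ ≤ (-(κ * y)) ^ 2 := this
      _ = κ ^ 2 * y ^ 2 := by ring
  have hexp1 : Real.exp (-(κ * y)) ≤ 1 := Real.exp_le_one_iff.mpr (by linarith)
  have hexp2 : 1 - Real.exp (-(κ * y)) ≤ κ * y := by
    have := Real.add_one_le_exp (-(κ * y)); linarith
  have ht2 : |((κ * y) / (γ - 1)) * (1 - Real.exp (-(κ * y)))| ≤ κ ^ 2 * y ^ 2 / (γ - 1) := by
    rw [abs_of_nonneg (mul_nonneg (by positivity) (by linarith [hexp1]))]
    calc ((κ * y) / (γ - 1)) * (1 - Real.exp (-(κ * y)))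
        ≤ ((κ * y) / (γ - 1)) * (κ * y) :=
          mul_le_mul_of_nonneg_left hexp2 (by positivity)
      _ = κ ^ 2 * y ^ 2 / (γ - 1) := by ring
  have ht3 : |κ ^ γ * y ^ γ * J / (γ - 1)| ≤ κ ^ 2 * y ^ 2 / ((2 - γ) * (γ - 1)) := by
    have hJ0 : 0 ≤ J := gpfaux_J_nonneg γ
    have hK0 : 0 ≤ κ ^ γ * y ^ γ := by positivity
    rw [abs_of_nonneg (by positivity)]
    calc κ ^ γ * y ^ γ * J / (γ - 1)
        ≤ κ ^ γ * y ^ γ * ((κ * y) ^ (2 - γ) / (2 - γ)) / (γ - 1) := by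
          have := gpfaux_J_le γ hγ hγ' hx
          gcongr
      _ = κ ^ γ * y ^ γ * (κ * y) ^ (2 - γ) / ((2 - γ) * (γ - 1)) := by
          rw [← mul_div_assoc, div_div]
      _ = κ ^ 2 * y ^ 2 / ((2 - γ) * (γ - 1)) := by rw [e3]
  have habs : |F y - (1 - n * y + ρ * y ^ γ)|
      ≤ κ ^ 2 * y ^ 2 + κ ^ 2 * y ^ 2 / (γ - 1) + κ ^ 2 * y ^ 2 / ((2 - γ) * (γ - 1)) := by
    rw [hD]
    have h1 := abs_add_le (Real.exp (-(κ * y)) - 1 + κ * y) (((κ * y) / (γ - 1)) * (1 - Real.exp (-(κ * y))))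
    have h2 : |(Real.exp (-(κ * y)) - 1 + κ * y) + (((κ * y) / (γ - 1)) * (1 - Real.exp (-(κ * y)))) - (κ ^ γ * y ^ γ * J / (γ - 1))|
        ≤ |(Real.exp (-(κ * y)) - 1 + κ * y) + (((κ * y) / (γ - 1)) * (1 - Real.exp (-(κ * y))))| + |(κ ^ γ * y ^ γ * J / (γ - 1))| := by
      simpa [sub_eq_add_neg, abs_neg] using
        abs_add_le ((Real.exp (-(κ * y)) - 1 + κ * y) + (((κ * y) / (γ - 1)) * (1 - Real.exp (-(κ * y))))) (-(κ ^ γ * y ^ γ * J / (γ - 1)))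
    linarith
  rw [Real.norm_eq_abs, Real.norm_eq_abs, abs_of_nonneg (show (0:ℝ) ≤ y ^ 2 by positivity)]
  calc |F y - (1 - n * y + ρ * y ^ γ)| ≤ _ := habs
    _ = (κ ^ 2 + κ ^ 2 / (γ - 1) + κ ^ 2 / ((2 - γ) * (γ - 1))) * y ^ 2 := by ring
end

section
/- Let 0 < n < 1, 1 < γ < 2, ρ > 0 and z ∈ [0,1). Define φ(t) = e^{(n−1)t} and H(t) = (1−z) · φ(t) · ( 1 + (ρ/(1−n)) · (1 − φ(t)^{γ−1}) · (1−z)^{γ−1} )^{1/(1−γ)}. Then H(0) = 1 − z and H satisfies the ordinary differential equation H′(t) + (1−n) H(t) + ρ H(t)^γ = 0 for all t ≥ 0. -/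
open Real

/-- In the pure exponential waiting-time case, the function
`H(t) = (1-z) φ(t) (1 + (ρ/(1-n)) (1 - φ(t)^{γ-1}) (1-z)^{γ-1})^{1/(1-γ)}`,
with `φ(t) = e^{(n-1)t}`, satisfies `H(0) = 1 - z` and the ODE
`H' + (1-n) H + ρ H^γ = 0` for all `t ≥ 0`. -/
theorem exponential_case_H_solves_ode
    (n γ ρ z : ℝ) (hn : n ∈ Set.Ioo (0 : ℝ) 1) (hγ : 1 < γ) (hγ' : γ < 2)
    (hρ : 0 < ρ) (hz : z ∈ Set.Ico (0 : ℝ) 1)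
    (φ H : ℝ → ℝ)
    (hφ : ∀ t, φ t = Real.exp ((n - 1) * t))
    (hH : ∀ t, H t = (1 - z) * φ t *
      (1 + ρ / (1 - n) * (1 - φ t ^ (γ - 1)) * (1 - z) ^ (γ - 1)) ^ (1 / (1 - γ))) :
    H 0 = 1 - z ∧
      ∀ t ≥ (0 : ℝ), HasDerivAt H (-((1 - n) * H t + ρ * H t ^ γ)) t := by
  obtain ⟨hn0, hn1⟩ := hn
  obtain ⟨hz0, hz1⟩ := hz
  have hw : (0:ℝ) < 1 - z := by linarith
  have hwne : (1:ℝ) - z ≠ 0 := ne_of_gt hw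
  have ha : (0:ℝ) < 1 - n := by linarith
  have hane : (1:ℝ) - n ≠ 0 := ne_of_gt ha
  have hγ1 : (0:ℝ) < γ - 1 := by linarith
  have h1γ : (1:ℝ) - γ ≠ 0 := by linarith
  constructor
  · rw [hH 0, hφ 0]
    norm_num [Real.one_rpow]
  · intro t ht
    have hHfun : H = fun x => (1 - z) * Real.exp ((n-1)*x) *
        (1 + ρ/(1-n) * (1 - Real.exp ((n-1)*(γ-1)*x)) * (1-z)^(γ-1)) ^ (1/(1-γ)) := by
      funext x
      rw [hH x, hφ x, ← Real.exp_mul, show (n-1)*x*(γ-1) = (n-1)*(γ-1)*x from by ring]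
    have hFle : Real.exp ((n-1)*(γ-1)*t) ≤ 1 := by
      apply Real.exp_le_one_iff.mpr
      nlinarith [mul_nonneg (mul_nonneg hγ1.le ht) ha.le]
    have hUt : (0:ℝ) < (1 + ρ/(1-n) * (1 - Real.exp ((n-1)*(γ-1)*t)) * (1-z)^(γ-1)) := by
      have h1 : 0 ≤ ρ/(1-n) * (1 - Real.exp ((n-1)*(γ-1)*t)) * (1-z)^(γ-1) := by
        apply mul_nonneg (mul_nonneg (le_of_lt (div_pos hρ ha)) (by linarith))
        exact Real.rpow_nonneg (le_of_lt hw) _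
      linarith
    have hUtne : (1 + ρ/(1-n) * (1 - Real.exp ((n-1)*(γ-1)*t)) * (1-z)^(γ-1)) ≠ 0 := ne_of_gt hUt
    have h1 : HasDerivAt (fun x => Real.exp ((n-1)*x))
        (Real.exp ((n-1)*t) * ((n-1)*1)) t :=
      ((hasDerivAt_id t).const_mul (n-1)).exp
    have h2 : HasDerivAt (fun x => Real.exp ((n-1)*(γ-1)*x))
        (Real.exp ((n-1)*(γ-1)*t) * ((n-1)*(γ-1)*1)) t :=
      ((hasDerivAt_id t).const_mul ((n-1)*(γ-1))).exp
    have hu : HasDerivAt (fun x => 1 + ρ/(1-n) * (1 - Real.exp ((n-1)*(γ-1)*x)) * (1-z)^(γ-1))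
        (ρ/(1-n) * (-(Real.exp ((n-1)*(γ-1)*t) * ((n-1)*(γ-1)*1))) * (1-z)^(γ-1)) t :=
      (((h2.const_sub 1).const_mul (ρ/(1-n))).mul_const _).const_add 1
    have hrp : HasDerivAt (fun x =>
        (1 + ρ/(1-n) * (1 - Real.exp ((n-1)*(γ-1)*x)) * (1-z)^(γ-1)) ^ (1/(1-γ)))
        ((1/(1-γ) * (1 + ρ/(1-n) * (1 - Real.exp ((n-1)*(γ-1)*t)) * (1-z)^(γ-1)) ^ (1/(1-γ) - 1)) *
          (ρ/(1-n) * (-(Real.exp ((n-1)*(γ-1)*t) * ((n-1)*(γ-1)*1))) * (1-z)^(γ-1))) t :=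
      by have := (Real.hasDerivAt_rpow_const (p := 1/(1-γ)) (Or.inl hUtne)).comp t hu; exact this
    have key : HasDerivAt (fun x => (1 - z) * Real.exp ((n-1)*x) *
        (1 + ρ/(1-n) * (1 - Real.exp ((n-1)*(γ-1)*x)) * (1-z)^(γ-1)) ^ (1/(1-γ)))
        (((1-z) * (Real.exp ((n-1)*t) * ((n-1)*1))) * ((1 + ρ/(1-n) * (1 - Real.exp ((n-1)*(γ-1)*t)) * (1-z)^(γ-1)) ^ (1/(1-γ))) +
         ((1-z) * Real.exp ((n-1)*t)) *
          ((1/(1-γ) * (1 + ρ/(1-n) * (1 - Real.exp ((n-1)*(γ-1)*t)) * (1-z)^(γ-1)) ^ (1/(1-γ) - 1)) *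
            (ρ/(1-n) * (-(Real.exp ((n-1)*(γ-1)*t) * ((n-1)*(γ-1)*1))) * (1-z)^(γ-1)))) t :=
      (h1.const_mul (1-z)).mul hrp
    have hEpos : (0:ℝ) < Real.exp ((n-1)*t) := Real.exp_pos _
    have hexp1 : ((1 - z) * Real.exp ((n-1)*t) * (1 + ρ/(1-n) * (1 - Real.exp ((n-1)*(γ-1)*t)) * (1-z)^(γ-1)) ^ (1/(1-γ))) ^ γ
        = (1-z)^γ * (Real.exp ((n-1)*t))^γ * ((1 + ρ/(1-n) * (1 - Real.exp ((n-1)*(γ-1)*t)) * (1-z)^(γ-1)) ^ (1/(1-γ)))^γ := by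
      rw [Real.mul_rpow (by positivity) (Real.rpow_nonneg hUt.le _),
        Real.mul_rpow (le_of_lt hw) (le_of_lt hEpos)]
    have hexp2 : ((1 + ρ/(1-n) * (1 - Real.exp ((n-1)*(γ-1)*t)) * (1-z)^(γ-1)) ^ (1/(1-γ)))^γ = (1 + ρ/(1-n) * (1 - Real.exp ((n-1)*(γ-1)*t)) * (1-z)^(γ-1)) ^ (1/(1-γ) - 1) := by
      rw [← Real.rpow_mul hUt.le]
      congr 1
      field_simp
      ring
    have hexp3 : ((1:ℝ)-z)^γ = (1-z)^(γ-1) * (1-z) := by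
      rw [← Real.rpow_add_one hwne]
      ring_nf
    have hexp4 : (Real.exp ((n-1)*t))^γ = Real.exp ((n-1)*t) * Real.exp ((n-1)*(γ-1)*t) := by
      rw [← Real.exp_mul, ← Real.exp_add]
      congr 1
      ring
    have hD : (((1-z) * (Real.exp ((n-1)*t) * ((n-1)*1))) * ((1 + ρ/(1-n) * (1 - Real.exp ((n-1)*(γ-1)*t)) * (1-z)^(γ-1)) ^ (1/(1-γ))) +
         ((1-z) * Real.exp ((n-1)*t)) *
          ((1/(1-γ) * (1 + ρ/(1-n) * (1 - Real.exp ((n-1)*(γ-1)*t)) * (1-z)^(γ-1)) ^ (1/(1-γ) - 1)) *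
            (ρ/(1-n) * (-(Real.exp ((n-1)*(γ-1)*t) * ((n-1)*(γ-1)*1))) * (1-z)^(γ-1))))
        = -((1 - n) * ((1 - z) * Real.exp ((n-1)*t) * (1 + ρ/(1-n) * (1 - Real.exp ((n-1)*(γ-1)*t)) * (1-z)^(γ-1)) ^ (1/(1-γ))) + ρ * ((1 - z) * Real.exp ((n-1)*t) * (1 + ρ/(1-n) * (1 - Real.exp ((n-1)*(γ-1)*t)) * (1-z)^(γ-1)) ^ (1/(1-γ))) ^ γ) := by
      rw [hexp1, hexp2, hexp3, hexp4]
      generalize ((1:ℝ)-z)^(γ-1) = W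
      generalize hFg : Real.exp ((n-1)*(γ-1)*t) = F
      generalize Real.exp ((n-1)*t) = E
      generalize (1 + ρ/(1-n) * (1 - F) * W) ^ (1/(1-γ)) = A
      generalize (1 + ρ/(1-n) * (1 - F) * W) ^ (1/(1-γ) - 1) = B
      field_simp
      ring
    rw [hHfun]
    exact hD ▸ key
end

section
/- Let θ ∈ (0,1], χ > 0, λ > 0, 1 < γ < 2 and C > 0. Define φ(t) = C χ (θ/((γ−1) t)) · λ t^θ (1 + λ t^θ)^{−γ/(γ−1)} · exp( −χ (1 + λ t^θ)^{1/(1−γ)} ) for t > 0, and set ϱ = θ/(γ−1) and ξ = C χ ϱ λ^{1/(1−γ)}. Then φ(t) is asymptotically equivalent to ξ t^{−ϱ−1} as t → +∞, i.e. φ(t)·t^{ϱ+1} → ξ as t → ∞. -/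
open Filter Real

/-- The probability density of ν-cluster durations in the critical regime `n = 1`,
`φ(t) = C χ (θ/((γ-1)t)) λ t^θ (1+λt^θ)^{-γ/(γ-1)} exp(-χ(1+λt^θ)^{1/(1-γ)})`,
has the power-law tail `φ(t) ∼ ξ t^{-ϱ-1}` as `t → ∞`, where `ϱ = θ/(γ-1)` and
`ξ = C χ ϱ λ^{1/(1-γ)}`. -/
theorem critical_cluster_duration_pdf_tail
    (θ χ lam γ C : ℝ) (hθ : θ ∈ Set.Ioc (0 : ℝ) 1) (hχ : 0 < χ) (hlam : 0 < lam)
    (hγ : 1 < γ) (hγ' : γ < 2) (hC : 0 < C)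
    (φ : ℝ → ℝ)
    (hφ : ∀ t > (0 : ℝ),
      φ t = C * χ * (θ / ((γ - 1) * t)) * (lam * t ^ θ)
        * (1 + lam * t ^ θ) ^ (-γ / (γ - 1))
        * Real.exp (-χ * (1 + lam * t ^ θ) ^ (1 / (1 - γ))))
    (ϱ ξ : ℝ) (hϱ : ϱ = θ / (γ - 1)) (hξ : ξ = C * χ * ϱ * lam ^ (1 / (1 - γ))) :
    Tendsto (fun t => φ t * t ^ (ϱ + 1)) atTop (nhds ξ) := by
  have hγ1 : (0:ℝ) < γ - 1 := by linarith
  have hγne : γ - 1 ≠ 0 := ne_of_gt hγ1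
  set p : ℝ := -γ / (γ - 1) with hp
  set K : ℝ := C * χ * (θ / (γ - 1)) * lam with hK
  -- limits of the pieces
  have h1 : Tendsto (fun t : ℝ => t ^ (-θ) + lam) atTop (nhds lam) := by
    have := (tendsto_rpow_neg_atTop hθ.1).add_const lam
    simpa using this
  have h2 : Tendsto (fun t : ℝ => (t ^ (-θ) + lam) ^ p) atTop (nhds (lam ^ p)) :=
    h1.rpow_const (Or.inl (ne_of_gt hlam))
  have h3 : Tendsto (fun t : ℝ => 1 + lam * t ^ θ) atTop atTop := by
    apply tendsto_atTop_add_const_left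
    exact (tendsto_rpow_atTop hθ.1).const_mul_atTop hlam
  have h4 : Tendsto (fun t : ℝ => (1 + lam * t ^ θ) ^ (1 / (1 - γ))) atTop (nhds 0) := by
    have h1γ : (1:ℝ) - γ ≠ 0 := by linarith
    have hneg : 1 / (1 - γ) = -(1/(γ-1)) := by field_simp; ring
    have := (tendsto_rpow_neg_atTop (by positivity : (0:ℝ) < 1/(γ-1))).comp h3
    rw [hneg]
    simpa [Function.comp_def] using this
  have h5 : Tendsto (fun t : ℝ => Real.exp (-χ * (1 + lam * t ^ θ) ^ (1 / (1 - γ))))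
      atTop (nhds 1) := by
    have h6 : Tendsto (fun t : ℝ => -χ * (1 + lam * t ^ θ) ^ (1 / (1 - γ)))
        atTop (nhds 0) := by simpa using h4.const_mul (-χ)
    have := (Real.continuous_exp.tendsto 0).comp h6
    simpa [Function.comp_def] using this
  have hlim : Tendsto (fun t : ℝ => K * (t ^ (-θ) + lam) ^ p
      * Real.exp (-χ * (1 + lam * t ^ θ) ^ (1 / (1 - γ)))) atTop
      (nhds (K * lam ^ p * 1)) :=
    (tendsto_const_nhds.mul h2).mul h5
  -- identify the limit with ξ
  have hval : K * lam ^ p * 1 = ξ := by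
    rw [hξ, hϱ, hK, mul_one]
    have hexp : 1 + p = 1 / (1 - γ) := by
      have h1γ : (1:ℝ) - γ ≠ 0 := by linarith
      rw [hp]; field_simp; ring
    have : lam * lam ^ p = lam ^ (1 / (1 - γ)) := by
      rw [← hexp, Real.rpow_add hlam, Real.rpow_one]
    rw [mul_assoc, this]
  rw [← hval]
  -- eventual equality
  apply hlim.congr'
  filter_upwards [eventually_gt_atTop (0:ℝ)] with t ht
  rw [hφ t ht]
  have htθ : (0:ℝ) < t ^ θ := Real.rpow_pos_of_pos ht θ
  have hA : (0:ℝ) < 1 + lam * t ^ θ := by positivity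
  have hsplit : t ^ (-θ) + lam = t ^ (-θ) * (1 + lam * t ^ θ) := by
    have h1 : t ^ (-θ) * t ^ θ = 1 := by
      rw [← Real.rpow_add ht]; simp
    ring_nf
    rw [mul_comm (t ^ (-θ)) (t ^ θ)] at *
    nlinarith [h1]
  have key : (t ^ (-θ) + lam) ^ p = t ^ (θ + ϱ) * (1 + lam * t ^ θ) ^ p := by
    rw [hsplit, Real.mul_rpow (le_of_lt (Real.rpow_pos_of_pos ht (-θ))) (le_of_lt hA),
      ← Real.rpow_mul (le_of_lt ht)]
    congr 1
    rw [hp, hϱ]; field_simp; ring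
  rw [key]
  have ht1 : t ^ θ * t ^ (ϱ + 1) = (t ^ (θ + ϱ)) * t := by
    have : t ^ θ * t ^ (ϱ + 1) = t ^ (θ + ϱ) * t ^ (1:ℝ) := by
      rw [← Real.rpow_add ht, ← Real.rpow_add ht]; ring_nf
    simpa [Real.rpow_one] using this
  rw [hK]
  field_simp
  linear_combination (-θ) * ht1
end

section
/- Let b > 0, let n ≥ 2 be an integer, and let X_1, …, X_n be i.i.d. real-valued random variables with P(X_i ≥ x) = 10^{−b x} for all x ≥ 0 (so each X_i is a.s. nonnegative with continuous distribution). Let M = max_{1≤i≤n} X_i be the largest value and M₁ = min_{1≤i≤n} ( max_{j≠i} X_j ) be the second largest value. Then for every ν ≥ 0, P( M − M₁ ≥ ν ) = 10^{−b ν}; that is, the gap between the largest and second-largest values follows the same Gutenberg–Richter law as each X_i. -/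
open MeasureTheory ProbabilityTheory Filter

section egrAux
variable {Ω : Type*} [MeasurableSpace Ω] (P : Measure Ω) [IsProbabilityMeasure P]

lemma egr_cont10 : Continuous fun t : ℝ => (10 : ℝ) ^ t :=
  Continuous.rpow continuous_const continuous_id (fun _ => Or.inl (by norm_num))

lemma egr_meas_ciSup {ι : Type*} [Fintype ι] [Nonempty ι]
    {f : ι → Ω → ℝ} (hf : ∀ i, Measurable (f i)) :
    Measurable fun ω => ⨆ i, f i ω := by
  have h : (fun ω => ⨆ i, f i ω)
      = Finset.univ.sup' Finset.univ_nonempty (fun i => f i) := by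
    funext ω
    rw [Finset.sup'_apply, Finset.sup'_univ_eq_ciSup]
  rw [h]
  exact Finset.measurable_sup' _ fun i _ => hf i

lemma egr_atomless (b : ℝ) (Y : Ω → ℝ) (hY : Measurable Y)
    (hlaw : ∀ x ≥ (0:ℝ), P {ω | x ≤ Y ω} = ENNReal.ofReal ((10:ℝ) ^ (-(b*x)))) :
    ∀ x : ℝ, P {ω | Y ω = x} = 0 := by
  intro x
  rcases lt_or_ge x 0 with hx | hx
  · have h0 : P {ω | (0:ℝ) ≤ Y ω} = 1 := by
      rw [hlaw 0 le_rfl]; norm_num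
    have hc : P {ω | (0:ℝ) ≤ Y ω}ᶜ = 0 := by
      rw [measure_compl (measurableSet_le measurable_const hY) (measure_ne_top _ _), h0]
      simp
    refine measure_mono_null ?_ hc
    intro ω hω
    simp only [Set.mem_setOf_eq] at hω
    simp only [Set.mem_compl_iff, Set.mem_setOf_eq, not_le]
    linarith
  · have key : ∀ k : ℕ, P {ω | Y ω = x}
        ≤ ENNReal.ofReal ((10:ℝ)^(-(b*x)) - (10:ℝ)^(-(b*(x+1/(k+1))))) := by
      intro k
      have hk : (0:ℝ) < 1/(k+1) := by positivity
      have hsub : {ω | Y ω = x} ⊆ {ω | x ≤ Y ω} \ {ω | x + 1/(k+1) ≤ Y ω} := by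
        intro ω hω
        simp only [Set.mem_setOf_eq] at hω
        constructor
        · simp [Set.mem_setOf_eq, hω]
        · simp only [Set.mem_setOf_eq, hω, not_le]; linarith
      refine (measure_mono hsub).trans ?_
      have hss : {ω | x + 1/((k:ℝ)+1) ≤ Y ω} ⊆ {ω | x ≤ Y ω} := by
        intro ω hω; simp only [Set.mem_setOf_eq] at hω ⊢; linarith
      rw [measure_diff hss
        ((measurableSet_le measurable_const hY).nullMeasurableSet) (measure_ne_top _ _),
        hlaw x hx, hlaw (x + 1/(k+1)) (by linarith),
        ← ENNReal.ofReal_sub _ (Real.rpow_nonneg (by norm_num) _)]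
    have htend : Tendsto (fun k : ℕ => ENNReal.ofReal ((10:ℝ)^(-(b*x)) - (10:ℝ)^(-(b*(x+1/(k+1))))))
        atTop (nhds 0) := by
      have h1 : Tendsto (fun k : ℕ => x + 1/((k:ℝ)+1)) atTop (nhds x) := by
        simpa using (tendsto_const_nhds (x := x)).add tendsto_one_div_add_atTop_nhds_zero_nat
      have h2 : Tendsto (fun k : ℕ => (10:ℝ)^(-(b*(x+1/(k+1))))) atTop (nhds ((10:ℝ)^(-(b*x)))) := by
        have hc : Continuous fun t : ℝ => (10:ℝ)^(-(b*t)) :=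
          egr_cont10.comp (by continuity)
        exact (hc.tendsto x).comp h1
      have h3 : Tendsto (fun k : ℕ => (10:ℝ)^(-(b*x)) - (10:ℝ)^(-(b*(x+1/(k+1)))))
          atTop (nhds 0) := by
        simpa using (tendsto_const_nhds (x := (10:ℝ)^(-(b*x)))).sub h2
      simpa [Function.comp_def] using (ENNReal.continuous_ofReal.tendsto 0).comp h3
    exact le_antisymm (ge_of_tendsto' htend key) zero_le

lemma egr_no_tie (Y Z : Ω → ℝ) (hY : Measurable Y) (hZ : Measurable Z)
    (hind : IndepFun Y Z P) (hZatom : ∀ x : ℝ, P {ω | Z ω = x} = 0) :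
    P {ω | Y ω = Z ω} = 0 := by
  have hmap := (indepFun_iff_map_prod_eq_prod_map_map hY.aemeasurable hZ.aemeasurable).mp hind
  have hs : MeasurableSet {p : ℝ × ℝ | p.1 = p.2} :=
    measurableSet_eq_fun measurable_fst measurable_snd
  have h1 : P {ω | Y ω = Z ω} = (P.map (fun ω => (Y ω, Z ω))) {p : ℝ × ℝ | p.1 = p.2} := by
    rw [Measure.map_apply (hY.prodMk hZ) hs]; rfl
  rw [h1, hmap, Measure.prod_apply hs]
  have h2 : ∀ y : ℝ, (P.map Z) {y} = 0 := by
    intro y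
    rw [Measure.map_apply hZ (measurableSet_singleton y)]
    have : Z ⁻¹' {y} = {ω | Z ω = y} := rfl
    rw [this, hZatom y]
  simp [h2]

lemma egr_gap (b : ℝ) (Y Z : Ω → ℝ) (hY : Measurable Y) (hZ : Measurable Z)
    (hind : IndepFun Y Z P)
    (hlaw : ∀ x ≥ (0:ℝ), P {ω | x ≤ Y ω} = ENNReal.ofReal ((10:ℝ) ^ (-(b*x))))
    (hZ0 : ∀ᵐ ω ∂P, 0 ≤ Z ω) (ν : ℝ) (hν : 0 ≤ ν) :
    P {ω | Z ω + ν ≤ Y ω}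
      = (∫⁻ z, ENNReal.ofReal ((10:ℝ) ^ (-(b*z))) ∂(P.map Z)) * ENNReal.ofReal ((10:ℝ)^(-(b*ν))) := by
  have hmap := (indepFun_iff_map_prod_eq_prod_map_map hY.aemeasurable hZ.aemeasurable).mp hind
  have hs : MeasurableSet {p : ℝ × ℝ | p.2 + ν ≤ p.1} :=
    measurableSet_le (by fun_prop) (by fun_prop)
  have h1 : P {ω | Z ω + ν ≤ Y ω} = (P.map (fun ω => (Y ω, Z ω))) {p : ℝ × ℝ | p.2 + ν ≤ p.1} := by
    rw [Measure.map_apply (hY.prodMk hZ) hs]; rfl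
  rw [h1, hmap, Measure.prod_apply_symm hs]
  have hae : ∀ᵐ z ∂(P.map Z),
      (P.map Y) ((fun x => (x, z)) ⁻¹' {p : ℝ × ℝ | p.2 + ν ≤ p.1})
        = ENNReal.ofReal ((10:ℝ)^(-(b*z))) * ENNReal.ofReal ((10:ℝ)^(-(b*ν))) := by
    have hz0 : ∀ᵐ z ∂(P.map Z), 0 ≤ z :=
      (ae_map_iff hZ.aemeasurable measurableSet_Ici).mpr hZ0
    filter_upwards [hz0] with z hz
    have hpre : ((fun x => (x, z)) ⁻¹' {p : ℝ × ℝ | p.2 + ν ≤ p.1}) = Set.Ici (z + ν) := rfl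
    rw [hpre, Measure.map_apply hY measurableSet_Ici]
    have : Y ⁻¹' Set.Ici (z + ν) = {ω | z + ν ≤ Y ω} := rfl
    rw [this, hlaw (z + ν) (by linarith)]
    rw [← ENNReal.ofReal_mul (Real.rpow_nonneg (by norm_num) _),
      ← Real.rpow_add (by norm_num : (0:ℝ) < 10)]
    ring_nf
  rw [lintegral_congr_ae hae]
  exact lintegral_mul_const _ (ENNReal.measurable_ofReal.comp
    ((Continuous.rpow continuous_const (by continuity)
      (fun _ => Or.inl (by norm_num))).measurable))

end egrAux

/-- The extremal Gutenberg–Richter law: for `n ≥ 2` i.i.d. magnitudes with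
`P(X_i ≥ x) = 10^{-bx}` for `x ≥ 0`, the gap `M - M₁` between the largest value `M`
and the second largest value `M₁` satisfies `P(M - M₁ ≥ ν) = 10^{-bν}` for all `ν ≥ 0`. -/
theorem extremal_gutenberg_richter_law
    {Ω : Type*} [MeasurableSpace Ω] (P : Measure Ω) [IsProbabilityMeasure P]
    (b : ℝ) (hb : 0 < b) (n : ℕ) (hn : 2 ≤ n)
    (X : Fin n → Ω → ℝ) (hXmeas : ∀ i, Measurable (X i))
    (hlaw : ∀ i, ∀ x ≥ (0 : ℝ),
      P {ω | x ≤ X i ω} = ENNReal.ofReal ((10 : ℝ) ^ (-(b * x))))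
    (hindep : iIndepFun X P)
    (M M₁ : Ω → ℝ)
    (hM : ∀ ω, M ω = ⨆ i, X i ω)
    (hM₁ : ∀ ω, M₁ ω = ⨅ i, ⨆ j : {j : Fin n // j ≠ i}, X (j : Fin n) ω) :
    ∀ ν ≥ (0 : ℝ), P {ω | ν ≤ M ω - M₁ ω} = ENNReal.ofReal ((10 : ℝ) ^ (-(b * ν))) := by
  intro ν hν
  haveI : NeZero n := ⟨by omega⟩
  have hcard : 1 < Fintype.card (Fin n) := by simp; omega
  haveI hne : ∀ i : Fin n, Nonempty {j : Fin n // j ≠ i} := fun i => by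
    obtain ⟨j, hj⟩ := Fintype.exists_ne_of_one_lt_card hcard i
    exact ⟨⟨j, hj⟩⟩
  set Z : Fin n → Ω → ℝ := fun i ω => ⨆ j : {j : Fin n // j ≠ i}, X (j : Fin n) ω with hZdef
  have hbdd : ∀ (i : Fin n) (ω : Ω),
      BddAbove (Set.range fun j : {j : Fin n // j ≠ i} => X (j : Fin n) ω) :=
    fun i ω => (Set.finite_range _).bddAbove
  have hZle : ∀ (i : Fin n) (ω : Ω) (j : Fin n), j ≠ i → X j ω ≤ Z i ω :=
    fun i ω j hj => le_ciSup (hbdd i ω) ⟨j, hj⟩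
  have hZle' : ∀ (i : Fin n) (ω : Ω) (t : ℝ), (∀ j, j ≠ i → X j ω ≤ t) → Z i ω ≤ t :=
    fun i ω t h => ciSup_le fun j => h j j.2
  have hZmeas : ∀ i, Measurable (Z i) := fun i => egr_meas_ciSup fun j => hXmeas j
  set A : ℝ → Fin n → Set Ω := fun t i => {ω | Z i ω + t ≤ X i ω} with hAdef
  have hAmeas : ∀ t i, MeasurableSet (A t i) := fun t i =>
    measurableSet_le ((hZmeas i).add_const t) (hXmeas i)
  -- structure of max
  have hstruct : ∀ (ω : Ω) (i : Fin n), (∀ j, X j ω ≤ X i ω) → M ω = X i ω ∧ M₁ ω = Z i ω := by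
    intro ω i hi
    have hMi : M ω = X i ω := by
      rw [hM ω]
      exact le_antisymm (ciSup_le hi)
        (le_ciSup (f := fun j => X j ω) ((Set.finite_range _).bddAbove) i)
    have hZiM : Z i ω ≤ X i ω := hZle' i ω _ fun j _ => hi j
    have hM₁i : M₁ ω = Z i ω := by
      rw [hM₁ ω]
      refine le_antisymm (ciInf_le ((Set.finite_range _).bddBelow) i) (le_ciInf fun k => ?_)
      rcases eq_or_ne k i with rfl | hk
      · exact le_rfl
      · exact hZiM.trans (hZle k ω i (Ne.symm hk))
    exact ⟨hMi, hM₁i⟩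
  -- union decomposition
  have hunion : ∀ t ≥ (0:ℝ), {ω | t ≤ M ω - M₁ ω} = ⋃ i, A t i := by
    intro t ht
    ext ω
    simp only [Set.mem_iUnion, Set.mem_setOf_eq]
    constructor
    · intro h
      obtain ⟨i, hi⟩ := Finite.exists_max fun i => X i ω
      obtain ⟨hMi, hM₁i⟩ := hstruct ω i hi
      refine ⟨i, ?_⟩
      show Z i ω + t ≤ X i ω
      rw [hMi, hM₁i] at h
      linarith
    · rintro ⟨i, hi⟩
      have hZiX : Z i ω + t ≤ X i ω := hi
      have hij : ∀ j, X j ω ≤ X i ω := by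
        intro j
        rcases eq_or_ne j i with rfl | hj
        · exact le_rfl
        · exact (hZle i ω j hj).trans (by linarith)
      obtain ⟨hMi, hM₁i⟩ := hstruct ω i hij
      rw [hMi, hM₁i]
      linarith
  -- independence of X i and Z i
  have hindepZ : ∀ i, IndepFun (X i) (Z i) P := by
    intro i
    have h := hindep.indepFun_finset {i} ({i}ᶜ) disjoint_compl_right hXmeas
    have hφ : Measurable fun g : ({i} : Finset (Fin n)) → ℝ =>
        g ⟨i, Finset.mem_singleton_self i⟩ := measurable_pi_apply _
    have hψ : Measurable fun g : (({i}ᶜ : Finset (Fin n)) : Type _) → ℝ =>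
        ⨆ j : {j : Fin n // j ≠ i}, g ⟨(j : Fin n), by simp [Finset.mem_compl, j.2]⟩ :=
      egr_meas_ciSup fun j => measurable_pi_apply _
    exact h.comp hφ hψ
  -- nonnegativity
  have hX0 : ∀ j : Fin n, ∀ᵐ ω ∂P, 0 ≤ X j ω := by
    intro j
    rw [ae_iff]
    have h0 : P {ω | (0:ℝ) ≤ X j ω} = 1 := by rw [hlaw j 0 le_rfl]; norm_num
    have heq : {ω | ¬ (0:ℝ) ≤ X j ω} = {ω | (0:ℝ) ≤ X j ω}ᶜ := by ext ω; simp
    rw [heq, measure_compl (measurableSet_le measurable_const (hXmeas j)) (measure_ne_top _ _), h0]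
    simp
  have hZ0 : ∀ i, ∀ᵐ ω ∂P, 0 ≤ Z i ω := by
    intro i
    obtain ⟨j, hj⟩ := Fintype.exists_ne_of_one_lt_card hcard i
    filter_upwards [hX0 j] with ω hω
    exact hω.trans (hZle i ω j hj)
  -- atoms and a.e. disjointness
  have hatom : ∀ j : Fin n, ∀ x : ℝ, P {ω | X j ω = x} = 0 := fun j =>
    egr_atomless P b (X j) (hXmeas j) (hlaw j)
  have hAE : ∀ t, 0 ≤ t → Pairwise (Function.onFun (AEDisjoint P) (A t)) := by
    intro t ht i k hik
    refine measure_mono_null (fun ω hω => ?_)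
      (egr_no_tie P (X i) (X k) (hXmeas i) (hXmeas k) (hindep.indepFun hik) (hatom k))
    obtain ⟨h1, h2⟩ := hω
    have h1' : Z i ω + t ≤ X i ω := h1
    have h2' : Z k ω + t ≤ X k ω := h2
    show X i ω = X k ω
    have hki : X k ω ≤ Z i ω := hZle i ω k (Ne.symm hik)
    have hik' : X i ω ≤ Z k ω := hZle k ω i hik
    linarith
  -- measure of A t i
  set c : Fin n → ENNReal := fun i =>
    ∫⁻ z, ENNReal.ofReal ((10:ℝ)^(-(b*z))) ∂(P.map (Z i)) with hcdef
  have hPA : ∀ t, 0 ≤ t → ∀ i, P (A t i) = c i * ENNReal.ofReal ((10:ℝ)^(-(b*t))) :=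
    fun t ht i =>
      egr_gap P b (X i) (Z i) (hXmeas i) (hZmeas i) (hindepZ i) (hlaw i) (hZ0 i) t ht
  have hkey : ∀ t ≥ (0:ℝ),
      P {ω | t ≤ M ω - M₁ ω} = (∑' i, c i) * ENNReal.ofReal ((10:ℝ)^(-(b*t))) := by
    intro t ht
    rw [hunion t ht, measure_iUnion₀ (hAE t ht) fun i => (hAmeas t i).nullMeasurableSet]
    simp_rw [hPA t ht]
    exact ENNReal.tsum_mul_right
  have hsum : (∑' i, c i) = 1 := by
    have h0 := hkey 0 le_rfl
    have huniv : {ω | (0:ℝ) ≤ M ω - M₁ ω} = Set.univ := by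
      ext ω
      simp only [Set.mem_setOf_eq, Set.mem_univ, iff_true]
      obtain ⟨i, hi⟩ := Finite.exists_max fun i => X i ω
      obtain ⟨hMi, hM₁i⟩ := hstruct ω i hi
      have : Z i ω ≤ X i ω := hZle' i ω _ fun j _ => hi j
      rw [hMi, hM₁i]
      linarith
    rw [huniv] at h0
    norm_num at h0
    rw [tsum_fintype]; exact h0.symm
  rw [hkey ν hν, hsum, one_mul]
end
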